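/- (Gronwall variant.) Let a ≤ b, let λ : [a, b] → ℝ be continuously differentiable with λ(a) = 0, let μ ≥ 0 be a constant, and let y : [a, b] → ℝ be continuous and satisfy y(t) ≤ λ(t) + ∫_a^t μ y(s) ds for all t ∈ [a, b]. Then y(t) ≤ ∫_a^t e^{μ(t−s)} λ'(s) ds for all t ∈ [a, b]. -/

import Mathlib

/-- Gronwall variant: if `λ` is continuously differentiable on `[a, b]` with
`λ a = 0`, `μ ≥ 0`, and the continuous function `y` satisfies
`y t ≤ λ t + ∫_a^t μ y(s) ds` on `[a, b]`, then
`y t ≤ ∫_a^t e^{μ (t - s)} λ'(s) ds` on `[a, b]`. -/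
theorem stmt6 (a b : ℝ) (hab : a ≤ b) (lam lam' y : ℝ → ℝ) (μ : ℝ) (hμ : 0 ≤ μ)
    (hderiv : ∀ t ∈ Set.Icc a b, HasDerivWithinAt lam (lam' t) (Set.Icc a b) t)
    (hlam' : ContinuousOn lam' (Set.Icc a b))
    (hlam0 : lam a = 0)
    (hy : ContinuousOn y (Set.Icc a b))
    (hineq : ∀ t ∈ Set.Icc a b, y t ≤ lam t + ∫ s in a..t, μ * y s) :
    ∀ t ∈ Set.Icc a b, y t ≤ ∫ s in a..t, Real.exp (μ * (t - s)) * lam' s := by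
  have hlamc : ContinuousOn lam (Set.Icc a b) := fun t ht => (hderiv t ht).continuousWithinAt
  set Y : ℝ → ℝ := Set.IccExtend hab ((Set.Icc a b).restrict y) with hYdef
  set L : ℝ → ℝ := Set.IccExtend hab ((Set.Icc a b).restrict lam) with hLdef
  have hYc : Continuous Y := hy.restrict.Icc_extend'
  have hLc : Continuous L := hlamc.restrict.Icc_extend'
  have hYeq : ∀ t ∈ Set.Icc a b, Y t = y t := fun t ht => by
    simp [hYdef, Set.IccExtend_of_mem hab _ ht]
    rfl
  have hLeq : ∀ t ∈ Set.Icc a b, L t = lam t := fun t ht => by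
    simp [hLdef, Set.IccExtend_of_mem hab _ ht]
    rfl
  set g : ℝ → ℝ := fun t => ∫ s in a..t, μ * Y s with hgdef
  have hgderiv : ∀ t : ℝ, HasDerivAt g (μ * Y t) t := fun t =>
    ((continuous_const.mul hYc).integral_hasStrictDerivAt a t).hasDerivAt
  have hgy : ∀ t ∈ Set.Icc a b, g t = ∫ s in a..t, μ * y s := by
    intro t ht
    apply intervalIntegral.integral_congr
    intro s hs
    rw [Set.uIcc_of_le ht.1] at hs
    have hs' : s ∈ Set.Icc a b := ⟨hs.1, hs.2.trans ht.2⟩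
    simp [hYeq s hs']
  have hkey : ∀ t ∈ Set.Icc a b, y t ≤ lam t + g t := by
    intro t ht
    rw [hgy t ht]; exact hineq t ht
  -- exponential derivative helper
  have hexpderiv : ∀ t : ℝ, HasDerivAt (fun u => Real.exp (-(μ * u)))
      (-μ * Real.exp (-(μ * t))) t := by
    intro t
    have hinner : HasDerivAt (fun u : ℝ => -(μ * u)) (-μ) t := by
      simpa using ((hasDerivAt_id t).const_mul μ).fun_neg
    simpa [mul_comm] using hinner.exp
  set I : ℝ → ℝ := fun t => ∫ s in a..t, μ * Real.exp (-(μ * s)) * L s with hIdef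
  have hIderiv : ∀ t : ℝ, HasDerivAt I (μ * Real.exp (-(μ * t)) * L t) t := fun t =>
    (((continuous_const.mul (Real.continuous_exp.comp (continuous_const.mul continuous_id).neg)).mul
      hLc).integral_hasStrictDerivAt a t).hasDerivAt
  set w : ℝ → ℝ := fun t => Real.exp (-(μ * t)) * g t - I t with hwdef
  have hwderiv : ∀ t : ℝ,
      HasDerivAt w (μ * Real.exp (-(μ * t)) * (Y t - L t - g t)) t := by
    intro t
    have := ((hexpderiv t).fun_mul (hgderiv t)).fun_sub (hIderiv t)
    refine this.congr_deriv ?_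
    ring
  have hwanti : AntitoneOn w (Set.Icc a b) := by
    apply antitoneOn_of_hasDerivWithinAt_nonpos (convex_Icc a b)
      (fun t _ => (hwderiv t).continuousAt.continuousWithinAt)
      (fun t _ => (hwderiv t).hasDerivWithinAt)
    intro t ht
    rw [interior_Icc] at ht
    have ht' : t ∈ Set.Icc a b := Set.Ioo_subset_Icc_self ht
    have h1 : Y t - L t - g t ≤ 0 := by
      rw [hYeq t ht', hLeq t ht']
      have := hkey t ht'
      linarith
    have h2 : 0 ≤ μ * Real.exp (-(μ * t)) := mul_nonneg hμ (Real.exp_pos _).le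
    exact mul_nonpos_of_nonneg_of_nonpos h2 h1
  have hwa : w a = 0 := by simp [hwdef, hgdef, hIdef]
  have hwle : ∀ t ∈ Set.Icc a b, w t ≤ 0 := by
    intro t ht
    have := hwanti ⟨le_rfl, hab⟩ ht ht.1
    rwa [hwa] at this
  -- hence g t ≤ exp(μ t) * I t
  have hgle : ∀ t ∈ Set.Icc a b, g t ≤ ∫ s in a..t, μ * Real.exp (μ * (t - s)) * lam s := by
    intro t ht
    have hw := hwle t ht
    have hgI : g t ≤ Real.exp (μ * t) * I t := by
      have h0 : Real.exp (-(μ * t)) * g t ≤ I t := by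
        simp only [hwdef] at hw; linarith
      calc g t = Real.exp (μ * t) * (Real.exp (-(μ * t)) * g t) := by
            rw [← mul_assoc, ← Real.exp_add]; simp
        _ ≤ Real.exp (μ * t) * I t :=
            mul_le_mul_of_nonneg_left h0 (Real.exp_pos _).le
    refine hgI.trans_eq ?_
    rw [hIdef, ← intervalIntegral.integral_const_mul]
    apply intervalIntegral.integral_congr
    intro s hs
    rw [Set.uIcc_of_le ht.1] at hs
    have hs' : s ∈ Set.Icc a b := ⟨hs.1, hs.2.trans ht.2⟩
    have hexp : Real.exp (μ * (t - s)) = Real.exp (μ * t) * Real.exp (-(μ * s)) := by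
      rw [← Real.exp_add]; ring_nf
    show Real.exp (μ * t) * (μ * Real.exp (-(μ * s)) * L s) =
      μ * Real.exp (μ * (t - s)) * lam s
    rw [hLeq s hs', hexp]; ring
  -- integration by parts identity
  intro t ht
  have hta : a ≤ t := ht.1
  have htb : t ≤ b := ht.2
  have hsub : Set.Icc a t ⊆ Set.Icc a b := Set.Icc_subset_Icc_right htb
  set F : ℝ → ℝ := fun s => Real.exp (μ * (t - s)) * lam s with hFdef
  set F' : ℝ → ℝ := fun s =>
    Real.exp (μ * (t - s)) * lam' s - μ * Real.exp (μ * (t - s)) * lam s with hF'def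
  have hec : Continuous fun s : ℝ => Real.exp (μ * (t - s)) :=
    Real.continuous_exp.comp (continuous_const.mul (continuous_const.sub continuous_id))
  have hFcont : ContinuousOn F (Set.Icc a t) :=
    hec.continuousOn.mul (hlamc.mono hsub)
  have hFd : ∀ s ∈ Set.Ioo a t, HasDerivAt F (F' s) s := by
    intro s hs
    have hs' : s ∈ Set.Icc a b := hsub (Set.Ioo_subset_Icc_self hs)
    have hmem : Set.Icc a b ∈ nhds s := Icc_mem_nhds hs.1 (hs.2.trans_le htb)
    have hlamd : HasDerivAt lam (lam' s) s := (hderiv s hs').hasDerivAt hmem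
    have hed : HasDerivAt (fun u => Real.exp (μ * (t - u)))
        (-μ * Real.exp (μ * (t - s))) s := by
      have hinner : HasDerivAt (fun u : ℝ => μ * (t - u)) (-μ) s := by
        simpa using ((hasDerivAt_id s).const_sub t).const_mul μ
      simpa [mul_comm] using hinner.exp
    have := hed.fun_mul hlamd
    refine this.congr_deriv ?_
    simp only [hF'def]
    ring
  have hint1 : IntervalIntegrable (fun s => Real.exp (μ * (t - s)) * lam' s)
      MeasureTheory.volume a t := by
    apply ContinuousOn.intervalIntegrable
    rw [Set.uIcc_of_le hta]
    exact hec.continuousOn.mul (hlam'.mono hsub)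
  have hint2 : IntervalIntegrable (fun s => μ * Real.exp (μ * (t - s)) * lam s)
      MeasureTheory.volume a t := by
    apply ContinuousOn.intervalIntegrable
    rw [Set.uIcc_of_le hta]
    exact ((continuous_const.mul hec).continuousOn).mul (hlamc.mono hsub)
  have hFint : IntervalIntegrable F' MeasureTheory.volume a t := hint1.sub hint2
  have hibp : (∫ s in a..t, F' s) = lam t := by
    rw [intervalIntegral.integral_eq_sub_of_hasDeriv_right_of_le hta hFcont
      (fun s hs => (hFd s hs).hasDerivWithinAt) hFint]
    simp [hFdef, hlam0]
  have hsplit : (∫ s in a..t, F' s) =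
      (∫ s in a..t, Real.exp (μ * (t - s)) * lam' s) -
      ∫ s in a..t, μ * Real.exp (μ * (t - s)) * lam s := by
    exact intervalIntegral.integral_sub hint1 hint2
  have hfinal : (∫ s in a..t, Real.exp (μ * (t - s)) * lam' s) =
      lam t + ∫ s in a..t, μ * Real.exp (μ * (t - s)) * lam s := by
    rw [← hibp, hsplit]; ring
  calc y t ≤ lam t + g t := hkey t ht
    _ ≤ lam t + ∫ s in a..t, μ * Real.exp (μ * (t - s)) * lam s := by
        linarith [hgle t ht]
    _ = ∫ s in a..t, Real.exp (μ * (t - s)) * lam' s := hfinal.symm
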